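/- arXiv:1901.02938 — 2 statements merged into one kernel-verified Lean document; each statement's English description precedes it below -/
import Mathlib

section
/- For all skew polynomials F, G ∈ F_{q^r}[x; σ], every a ∈ F_{q^r}, and the ordered basis β of F_{q^r} over F_q, the evaluation satisfies (FG)^{D_a}(β) = F^{D_a}(β) ⋆ G^{D_a}(β), where for a skew polynomial H, H^{D_a}(β) denotes the vector (H^{D_a}(β_1),…,H^{D_a}(β_r)). -/
/-- The i-th norm N_i(a) = σ^{i-1}(a)⋯σ(a)·a, where σ(x) = x^q. -/
noncomputable def Nnorm {K : Type*} [Field K] (q : ℕ) (a : K) (i : ℕ) : K :=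
  ∏ j ∈ Finset.range i, a ^ q ^ j

/-- Multiplication in the skew polynomial ring F_{q^r}[x;σ] with σ(β) = β^q. -/
noncomputable def skewMul {K : Type*} [Field K] (q : ℕ) (F G : Polynomial K) : Polynomial K :=
  ∑ i ∈ F.support, ∑ j ∈ G.support,
    Polynomial.C (F.coeff i * G.coeff j ^ q ^ i) * Polynomial.X ^ (i + j)

/-- The evaluation operator F^{D_a} = Σ F_i D_a^i, where D_a^i(x) = σ^i(x)·N_i(a). -/
noncomputable def evalD {K : Type*} [Field K] (q : ℕ) (a : K) (F : Polynomial K) (x : K) : K :=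
  ∑ i ∈ F.support, F.coeff i * (x ^ q ^ i * Nnorm q a i)

/-- The matrix-representation map M_β with respect to an ordered basis β. -/
noncomputable def Mmat {Fq F : Type*} [Field Fq] [Field F] [Algebra Fq F] {r : ℕ}
    (b : Module.Basis (Fin r) Fq F) (x : Fin r → F) : Matrix (Fin r) (Fin r) Fq :=
  Matrix.of fun i j => b.repr (x j) i

/-- The matrix product x ⋆ y = M_β^{-1}(M_β(x)·M_β(y)) on F_{q^r}^r. -/
noncomputable def starProd {Fq F : Type*} [Field Fq] [Field F] [Algebra Fq F] {r : ℕ}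
    (b : Module.Basis (Fin r) Fq F) (x y : Fin r → F) : Fin r → F :=
  Function.invFun (Mmat b) (Mmat b x * Mmat b y)

lemma evalD_eq_sum {K : Type*} [Field K] (q : ℕ) (a : K) (H : Polynomial K) (x : K) :
    evalD q a H x = H.sum (fun i c => c * (x ^ q ^ i * Nnorm q a i)) := rfl

lemma Nnorm_add {K : Type*} [Field K] (q : ℕ) (a : K) (i j : ℕ) :
    Nnorm q a (i + j) = Nnorm q a i * (Nnorm q a j) ^ q ^ i := by
  simp only [Nnorm, Finset.prod_range_add]
  congr 1
  rw [← Finset.prod_pow]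
  refine Finset.prod_congr rfl fun t _ => ?_
  rw [← pow_mul, ← pow_add, add_comm i t]

/-- evalD of a skew product is the composition of the evalD's. -/
lemma evalD_skewMul {K : Type*} [Field K] {p n q : ℕ} [Fact p.Prime] [CharP K p]
    (hq : q = p ^ n) (a x : K) (P Q : Polynomial K) :
    evalD q a (skewMul q P Q) x = evalD q a P (evalD q a Q x) := by
  haveI : ExpChar K p := ExpChar.prime Fact.out
  have hpow : ∀ (s : Finset ℕ) (f : ℕ → K) (m : ℕ),
      (∑ j ∈ s, f j) ^ q ^ m = ∑ j ∈ s, f j ^ q ^ m := by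
    intro s f m
    rw [hq, ← pow_mul]
    exact sum_pow_char_pow p (n*m) s f
  -- evaluate the left side
  have hmono : ∀ (m : ℕ) (c : K),
      evalD q a (Polynomial.C c * Polynomial.X ^ m) x = c * (x ^ q ^ m * Nnorm q a m) := by
    intro m c
    rw [evalD_eq_sum, Polynomial.C_mul_X_pow_eq_monomial, Polynomial.sum_monomial_index]
    exact zero_mul _
  let E : Polynomial K →+ K :=
    { toFun := fun H => evalD q a H x
      map_zero' := by simp [evalD_eq_sum]
      map_add' := fun H₁ H₂ => by
        simp only [evalD_eq_sum]
        exact Polynomial.sum_add_index H₁ H₂ _ (fun i => zero_mul _)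
          (fun i c d => add_mul c d _) }
    -- left side
  have hL : evalD q a (skewMul q P Q) x
      = ∑ i ∈ P.support, ∑ j ∈ Q.support,
          (P.coeff i * Q.coeff j ^ q ^ i) * (x ^ q ^ (i + j) * Nnorm q a (i + j)) := by
    show E (skewMul q P Q) = _
    rw [skewMul, map_sum]
    refine Finset.sum_congr rfl fun i _ => ?_
    rw [map_sum]
    exact Finset.sum_congr rfl fun j _ => hmono _ _
  rw [hL]
  -- evaluate the right side
  rw [evalD_eq_sum, evalD_eq_sum, Polynomial.sum, Polynomial.sum]
  refine Finset.sum_congr rfl fun i _ => ?_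
  rw [hpow, Finset.sum_mul, Finset.mul_sum]
  refine Finset.sum_congr rfl fun j _ => ?_
  rw [Nnorm_add, mul_pow, mul_pow, ← pow_mul, ← pow_add, add_comm j i]
  ring

/-- (FG)^{D_a}(β) = F^{D_a}(β) ⋆ G^{D_a}(β). -/
theorem stmt12 (q r : ℕ) (hr : 1 ≤ r) (Fq F : Type*) [Field Fq] [Fintype Fq]
    [Field F] [Fintype F] [Algebra Fq F]
    (hq : Fintype.card Fq = q) (hF : Fintype.card F = q ^ r)
    (b : Module.Basis (Fin r) Fq F) (a : F) (P Q : Polynomial F) :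
    (fun i => evalD q a (skewMul q P Q) (b i)) =
      starProd b (fun i => evalD q a P (b i)) (fun i => evalD q a Q (b i)) := by
  classical
  -- characteristic facts
  set p := ringChar Fq with hpdef
  haveI : CharP Fq p := ringChar.charP Fq
  have hp : p.Prime := CharP.char_is_prime Fq p
  haveI : Fact p.Prime := ⟨hp⟩
  obtain ⟨n, -, hqp⟩ := FiniteField.card Fq p
  rw [hq] at hqp
  haveI : CharP F p := charP_of_injective_algebraMap (algebraMap Fq F).injective p
  haveI : ExpChar F p := ExpChar.prime hp
  -- evalD as an Fq-linear map
  have hadd : ∀ (H : Polynomial F) (x y : F),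
      evalD q a H (x + y) = evalD q a H x + evalD q a H y := by
    intro H x y
    rw [evalD, evalD, evalD, ← Finset.sum_add_distrib]
    refine Finset.sum_congr rfl fun i _ => ?_
    have : (x + y) ^ q ^ i = x ^ q ^ i + y ^ q ^ i := by
      rw [hqp, ← pow_mul]
      exact add_pow_char_pow x y p (n*i)
    rw [this]; ring
  have hsmul : ∀ (H : Polynomial F) (c : Fq) (x : F),
      evalD q a H (c • x) = c • evalD q a H x := by
    intro H c x
    rw [evalD, evalD, Finset.smul_sum]
    refine Finset.sum_congr rfl fun i _ => ?_
    have hc : (c • x) ^ q ^ i = c • x ^ q ^ i := by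
      rw [Algebra.smul_def, Algebra.smul_def, mul_pow, ← map_pow, ← hq,
        FiniteField.pow_card_pow]
    rw [hc, Algebra.smul_def, Algebra.smul_def]; ring
  let L : Polynomial F → (F →ₗ[Fq] F) := fun H =>
    { toFun := evalD q a H
      map_add' := hadd H
      map_smul' := fun c x => hsmul H c x }
  -- Mmat of the evaluation vector is the matrix of the linear map
  have hM : ∀ H : Polynomial F,
      Mmat b (fun i => evalD q a H (b i)) = LinearMap.toMatrix b b (L H) := by
    intro H
    ext i j
    simp [Mmat, LinearMap.toMatrix_apply, L]
  -- Mmat is injective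
  have hinj : Function.Injective (Mmat (Fq := Fq) (F := F) b) := by
    intro x y h
    funext j
    apply b.repr.injective
    ext i
    exact congrFun (congrFun h i) j
  -- key matrix identity
  have hkey : Mmat b (fun i => evalD q a (skewMul q P Q) (b i)) =
      Mmat b (fun i => evalD q a P (b i)) * Mmat b (fun i => evalD q a Q (b i)) := by
    rw [hM, hM, hM, ← LinearMap.toMatrix_comp b b b]
    congr 1
    ext x
    exact evalD_skewMul hqp a x P Q
  rw [starProd, ← hkey, Function.leftInverse_invFun hinj]
end

section
/- With a = (γ^0,…,γ^{g-1}) for a primitive element γ of F_{q^r} and q > g, and β an ordered basis of F_{q^r} over F_q, the linearized Reed-Solomon code C_{N,k}(a,β) ⊆ F_{q^r}^N with N = gr is an MDS code: it is F_{q^r}-linear of dimension k and has minimum Hamming distance N - k + 1. -/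
/-- The coordinate-wise (block-wise) matrix product on F_{q^r}^{gr}. -/
noncomputable def cstar {Fq F : Type*} [Field Fq] [Field F] [Algebra Fq F] {r g : ℕ}
    (b : Module.Basis (Fin r) Fq F) (x y : Fin g × Fin r → F) : Fin g × Fin r → F :=
  fun p => starProd b (fun i => x (p.1, i)) (fun i => y (p.1, i)) p.2

/-- The total evaluation vector F^{D_a}(β), concatenating the g blocks
(F^{D_{a_j}}(β_1),…,F^{D_{a_j}}(β_r)). -/
noncomputable def totalEval {Fq F : Type*} [Field Fq] [Field F] [Algebra Fq F] {r g : ℕ}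
    (q : ℕ) (b : Module.Basis (Fin r) Fq F) (a : Fin g → F) (P : Polynomial F) :
    Fin g × Fin r → F :=
  fun p => evalD q (a p.1) P (b p.2)

/-- The (N,k) linearized Reed-Solomon code: total evaluation vectors of skew
polynomials of degree < k (or zero). -/
noncomputable def CodeLRS {Fq F : Type*} [Field Fq] [Field F] [Algebra Fq F] {r g : ℕ}
    (q : ℕ) (b : Module.Basis (Fin r) Fq F) (a : Fin g → F) (k : ℕ) :
    Set (Fin g × Fin r → F) :=
  {w | ∃ P : Polynomial F, P ∈ Polynomial.degreeLT F k ∧ w = totalEval q b a P}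

/-- Hamming weight of a vector. -/
noncomputable def wtv {ι F : Type*} [Zero F] (w : ι → F) : ℕ :=
  Set.ncard {i | w i ≠ 0}

open Finset Module LinearMap Polynomial

set_option linter.unusedSectionVars false
open scoped Classical

namespace LRS

variable {Fq F : Type*} [Field Fq] [Fintype Fq] [Field F] [Fintype F] [Algebra Fq F]
variable {q : ℕ}

lemma frob_add (hq : Fintype.card Fq = q) (n : ℕ) (x y : F) :
    (x + y) ^ q ^ n = x ^ q ^ n + y ^ q ^ n := by
  set p := ringChar Fq with hp
  haveI : Fact p.Prime := ⟨CharP.char_is_prime Fq p⟩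
  obtain ⟨e, -, hcard⟩ := FiniteField.card Fq p
  haveI : CharP F p := charP_of_injective_algebraMap (algebraMap Fq F).injective p
  rw [hq] at hcard
  subst hcard
  rw [← pow_mul]
  exact add_pow_char_pow ..

lemma frob_sub (hq : Fintype.card Fq = q) (n : ℕ) (x y : F) :
    (x - y) ^ q ^ n = x ^ q ^ n - y ^ q ^ n := by
  set p := ringChar Fq with hp
  haveI : Fact p.Prime := ⟨CharP.char_is_prime Fq p⟩
  obtain ⟨e, -, hcard⟩ := FiniteField.card Fq p
  haveI : CharP F p := charP_of_injective_algebraMap (algebraMap Fq F).injective p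
  rw [hq] at hcard
  subst hcard
  rw [← pow_mul]
  exact sub_pow_char_pow ..

lemma frob_smul (hq : Fintype.card Fq = q) (n : ℕ) (c : Fq) (x : F) :
    (c • x) ^ q ^ n = c • x ^ q ^ n := by
  rw [Algebra.smul_def, Algebra.smul_def, mul_pow, ← map_pow]
  have : c ^ q ^ n = c := by rw [← hq]; exact FiniteField.pow_card_pow n c
  rw [this]

lemma frob_sum (hq : Fintype.card Fq = q) (n : ℕ) {ι : Type*} (s : Finset ι) (f : ι → F) :
    (∑ i ∈ s, f i) ^ q ^ n = ∑ i ∈ s, (f i) ^ q ^ n := by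
  classical
  induction s using Finset.induction with
  | empty =>
    simp only [Finset.sum_empty]
    have hq2 : 2 ≤ q := by rw [← hq]; exact Fintype.one_lt_card
    exact zero_pow (by positivity)
  | insert _ _ h ih => rw [Finset.sum_insert h, Finset.sum_insert h, frob_add hq, ih]

lemma Nnorm_zero (a : F) : Nnorm q a 0 = 1 := by simp [Nnorm]

lemma Nnorm_succ (a : F) (i : ℕ) : Nnorm q a (i + 1) = Nnorm q a i * a ^ q ^ i := by
  simp [Nnorm, Finset.prod_range_succ]

lemma Nnorm_ne_zero {a : F} (ha : a ≠ 0) (i : ℕ) : Nnorm q a i ≠ 0 := by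
  simp only [Nnorm]
  exact Finset.prod_ne_zero_iff.2 fun j _ => pow_ne_zero _ ha

/-- The evaluation function Σ_{i ≤ d} p i · x^{q^i} · N_i(a). -/
noncomputable def Lfun (q : ℕ) (p : ℕ → F) (d : ℕ) (a : F) (x : F) : F :=
  ∑ i ∈ Finset.range (d + 1), p i * (x ^ q ^ i * Nnorm q a i)

/-- `Lfun` as an Fq-linear map. -/
noncomputable def Lmap (hq : Fintype.card Fq = q) (p : ℕ → F) (d : ℕ) (a : F) : F →ₗ[Fq] F where
  toFun := Lfun q p d a
  map_add' x y := by
    simp only [Lfun, frob_add hq, add_mul, mul_add, Finset.sum_add_distrib]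
  map_smul' c x := by
    simp only [Lfun, frob_smul hq, RingHom.id_apply, Finset.smul_sum]
    congr 1; ext i
    rw [smul_mul_assoc, mul_smul_comm]

@[simp] lemma Lmap_apply (hq : Fintype.card Fq = q) (p : ℕ → F) (d : ℕ) (a x : F) :
    Lmap hq p d a x = Lfun q p d a x := rfl


lemma finrank_ker_comp (f g : F →ₗ[Fq] F) :
    finrank Fq (ker (f ∘ₗ g)) ≤ finrank Fq (ker f) + finrank Fq (ker g) := by
  set W := ker (f ∘ₗ g) with hW
  have hmaps : ∀ x ∈ W, g x ∈ ker f := by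
    intro x hx
    simpa [hW, LinearMap.mem_ker] using hx
  set g' : W →ₗ[Fq] ker f := g.restrict hmaps with hg'
  have h1 : finrank Fq W = finrank Fq (range g') + finrank Fq (ker g') :=
    (LinearMap.finrank_range_add_finrank_ker g').symm
  have h2 : finrank Fq (range g') ≤ finrank Fq (ker f) := Submodule.finrank_le _
  have h3 : finrank Fq (ker g') ≤ finrank Fq (ker g) := by
    have hinj : Function.Injective (W.subtype) := Submodule.injective_subtype W
    have := Submodule.equivMapOfInjective W.subtype hinj (ker g')
    rw [this.finrank_eq]
    apply Submodule.finrank_mono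
    rintro x ⟨⟨y, hyW⟩, hy, rfl⟩
    have : g' ⟨y, hyW⟩ = 0 := hy
    have : g y = 0 := by
      have := congrArg (Subtype.val) this
      simpa [hg', LinearMap.restrict_apply] using this
    simpa [LinearMap.mem_ker] using this
  omega

/-- The linear map x ↦ x^q·a - c·x. -/
noncomputable def Dmap (hq : Fintype.card Fq = q) (a c : F) : F →ₗ[Fq] F where
  toFun x := x ^ q * a - c * x
  map_add' x y := by
    have h := frob_add hq 1 x y
    rw [pow_one] at h
    rw [h]; ring
  map_smul' d x := by
    have h := frob_smul hq 1 d x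
    rw [pow_one] at h
    simp only [h, RingHom.id_apply, smul_sub, smul_mul_assoc, mul_smul_comm]

lemma card_fix_le (hq : Fintype.card Fq = q) :
    (Finset.univ.filter (fun u : F => u ^ q = u)).card ≤ q := by
  classical
  have hq2 : 1 < q := by rw [← hq]; exact Fintype.one_lt_card
  set P : Polynomial F := X ^ q - X with hP
  have hP0 : P ≠ 0 := FiniteField.X_pow_card_sub_X_ne_zero F hq2
  have hsub : (Finset.univ.filter (fun u : F => u ^ q = u)) ⊆ P.roots.toFinset := by
    intro u hu
    rw [Finset.mem_filter] at hu
    rw [Multiset.mem_toFinset, Polynomial.mem_roots hP0]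
    simp [hP, Polynomial.IsRoot, hu.2, sub_eq_zero]
  calc (Finset.univ.filter (fun u : F => u ^ q = u)).card
      ≤ P.roots.toFinset.card := Finset.card_le_card hsub
    _ ≤ Multiset.card P.roots := Multiset.toFinset_card_le _
    _ ≤ P.natDegree := P.card_roots'
    _ = q := FiniteField.X_pow_card_sub_X_natDegree_eq F hq2

lemma finrank_ker_Dmap_le_one (hq : Fintype.card Fq = q) {a : F} (ha : a ≠ 0) (c : F) :
    finrank Fq (ker (Dmap hq a c)) ≤ 1 := by
  classical
  have hq2 : 1 < q := by rw [← hq]; exact Fintype.one_lt_card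
  by_cases hc : c = 0
  · have : ker (Dmap hq a c) = ⊥ := by
      rw [eq_bot_iff]
      intro x hx
      have : x ^ q * a - c * x = 0 := hx
      rw [hc, zero_mul, sub_zero, mul_eq_zero] at this
      have hx0 : x ^ q = 0 := this.resolve_right ha
      have : x = 0 := pow_eq_zero_iff (by omega) |>.1 hx0
      simpa using this
    rw [this, finrank_bot]
    omega
  by_cases hy : ∃ y : F, y ≠ 0 ∧ y ∈ ker (Dmap hq a c)
  · obtain ⟨y, hy0, hyk⟩ := hy
    have hykk : y ^ q * a - c * y = 0 := hyk
    have hyq : y ^ q = c * y / a := by field_simp; linear_combination hykk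
    -- injection from kernel into fixed points of Frobenius
    have hinj : ∀ x ∈ ker (Dmap hq a c), (x * y⁻¹) ^ q = x * y⁻¹ := by
      intro x hx
      have hxx : x ^ q * a - c * x = 0 := hx
      have hxq : x ^ q = c * x / a := by field_simp; linear_combination hxx
      rw [mul_pow, hxq, inv_pow, hyq]
      field_simp
    have hcard : Fintype.card (ker (Dmap hq a c)) ≤ q := by
      have : Function.Injective
          (fun x : ker (Dmap hq a c) => (⟨(x : F) * y⁻¹,
            hinj x x.2⟩ : {u : F // u ^ q = u})) := by
        intro x₁ x₂ h
        have := congrArg Subtype.val h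
        simp only at this
        ext
        exact mul_right_cancel₀ (inv_ne_zero hy0) this
      calc Fintype.card (ker (Dmap hq a c))
          ≤ Fintype.card {u : F // u ^ q = u} :=
            Fintype.card_le_of_injective _ this
        _ = (Finset.univ.filter (fun u : F => u ^ q = u)).card := Fintype.card_subtype _
        _ ≤ q := card_fix_le hq
    have hpow : q ^ finrank Fq (ker (Dmap hq a c)) ≤ q ^ 1 := by
      rw [pow_one]
      calc q ^ finrank Fq (ker (Dmap hq a c))
          = Fintype.card (ker (Dmap hq a c)) := by
            rw [card_eq_pow_finrank (K := Fq), hq]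
        _ ≤ q := hcard
    exact (Nat.pow_le_pow_iff_right hq2).1 hpow
  · push_neg at hy
    have : ker (Dmap hq a c) = ⊥ := by
      rw [eq_bot_iff]
      intro x hx
      by_contra hx0
      exact (hy x (by simpa using hx0)) hx
    rw [this, finrank_bot]
    omega

lemma card_basis_mem_le {r : ℕ} (b : Basis (Fin r) Fq F) (K : Submodule Fq F) :
    (Finset.univ.filter (fun i => b i ∈ K)).card ≤ finrank Fq K := by
  classical
  let v : {i : Fin r // b i ∈ K} → K := fun i => ⟨b i, i.2⟩
  have hvli : LinearIndependent Fq v := by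
    apply LinearIndependent.of_comp K.subtype
    have : K.subtype ∘ v = fun i : {i : Fin r // b i ∈ K} => b i.1 := rfl
    rw [this]
    exact b.linearIndependent.comp Subtype.val Subtype.val_injective
  have := hvli.fintype_card_le_finrank
  rwa [Fintype.card_subtype] at this

lemma card_zeros_le (hq : Fintype.card Fq = q) {g r : ℕ} (b : Basis (Fin r) Fq F)
    (a : Fin g → F) (p : ℕ → F) (d : ℕ)
    (hkey : ∑ j, finrank Fq (ker (Lmap hq p d (a j))) ≤ d) :
    (Finset.univ.filter
      (fun pr : Fin g × Fin r => Lfun q p d (a pr.1) (b pr.2) = 0)).card ≤ d := by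
  classical
  set s := Finset.univ.filter
      (fun pr : Fin g × Fin r => Lfun q p d (a pr.1) (b pr.2) = 0) with hs
  have hfib : s.card = ∑ j : Fin g, (s.filter (fun x => x.1 = j)).card :=
    Finset.card_eq_sum_card_fiberwise (fun x _ => Finset.mem_univ x.1)
  have hblock : ∀ j : Fin g, (s.filter (fun x => x.1 = j)).card
      = (Finset.univ.filter (fun i : Fin r => b i ∈ ker (Lmap hq p d (a j)))).card := by
    intro j
    apply Finset.card_bij (fun (x : Fin g × Fin r) _ => x.2)
    · intro x hx
      simp only [hs, Finset.mem_filter, Finset.mem_univ, true_and] at hx ⊢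
      rw [LinearMap.mem_ker, Lmap_apply, ← hx.2]
      exact hx.1
    · intro x hx y hy hxy
      simp only [hs, Finset.mem_filter] at hx hy
      exact Prod.ext (hx.2.trans hy.2.symm) hxy
    · intro i hi
      simp only [Finset.mem_filter, Finset.mem_univ, true_and, LinearMap.mem_ker,
        Lmap_apply] at hi
      exact ⟨(j, i), by simp [hs, hi], rfl⟩
  calc s.card = ∑ j : Fin g, (s.filter (fun x => x.1 = j)).card := hfib
    _ ≤ ∑ j : Fin g, finrank Fq (ker (Lmap hq p d (a j))) := by
        apply Finset.sum_le_sum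
        intro j _
        rw [hblock j]
        exact card_basis_mem_le b _
    _ ≤ d := hkey

lemma Nnorm_conj (hq : Fintype.card Fq = q) (x0 : F) (a : F) (t : ℕ) :
    Nnorm q (a * x0 ^ (q - 1)) t * x0 = Nnorm q a t * x0 ^ q ^ t := by
  have hq1 : 1 ≤ q := by
    have : 1 < Fintype.card Fq := Fintype.one_lt_card
    omega
  induction t with
  | zero => simp [Nnorm_zero]
  | succ t IH =>
    have hexp : q ^ t + (q - 1) * q ^ t = q ^ (t + 1) := by
      have h1 : q ^ (t + 1) = q * q ^ t := by ring
      have h2 : q ^ t ≤ q * q ^ t := Nat.le_mul_of_pos_left _ (by omega)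
      rw [Nat.sub_mul, one_mul]
      omega
    rw [Nnorm_succ, Nnorm_succ]
    have hc : (a * x0 ^ (q - 1)) ^ q ^ t = a ^ q ^ t * x0 ^ ((q - 1) * q ^ t) := by
      rw [mul_pow, ← pow_mul]
    calc Nnorm q (a * x0 ^ (q - 1)) t * (a * x0 ^ (q - 1)) ^ q ^ t * x0
        = (Nnorm q (a * x0 ^ (q - 1)) t * x0) * (a ^ q ^ t * x0 ^ ((q - 1) * q ^ t)) := by
          rw [hc]; ring
      _ = (Nnorm q a t * x0 ^ q ^ t) * (a ^ q ^ t * x0 ^ ((q - 1) * q ^ t)) := by rw [IH]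
      _ = Nnorm q a t * a ^ q ^ t * (x0 ^ q ^ t * x0 ^ ((q - 1) * q ^ t)) := by ring
      _ = Nnorm q a t * a ^ q ^ t * x0 ^ q ^ (t + 1) := by rw [← pow_add, hexp]

/-- Coefficients of the quotient in right division by (X - c). -/
noncomputable def Qcoeff {F : Type*} [Field F] (q : ℕ) (p : ℕ → F) (d : ℕ) (c : F) : ℕ → F :=
  fun m => (∑ t ∈ Finset.Ico (m + 1) (d + 2), p t * Nnorm q c t) / Nnorm q c (m + 1)

lemma Qcoeff_top {p : ℕ → F} {d : ℕ} {c : F} (hc : c ≠ 0) :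
    Qcoeff q p d c d = p (d + 1) := by
  have : Finset.Ico (d + 1) (d + 2) = {d + 1} := by
    ext t
    simp only [Finset.mem_Ico, Finset.mem_singleton]
    omega
  rw [Qcoeff, this, Finset.sum_singleton,
    mul_div_assoc, div_self (Nnorm_ne_zero hc _), mul_one]

lemma factor_step (hq : Fintype.card Fq = q) (d : ℕ) (p : ℕ → F) {c : F} (hc : c ≠ 0)
    (hroot : ∑ t ∈ Finset.range (d + 2), p t * Nnorm q c t = 0) (a x : F) :
    Lfun q p (d + 1) a x = Lfun q (Qcoeff q p d c) d a (x ^ q * a - c * x) := by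
  set Q := Qcoeff q p d c with hQ
  set S : ℕ → F := fun m => ∑ t ∈ Finset.Ico m (d + 2), p t * Nnorm q c t with hS
  have hQS : ∀ m, Q m = S (m + 1) / Nnorm q c (m + 1) := fun m => rfl
  have hSdef : ∀ m, S m = ∑ t ∈ Finset.Ico m (d + 2), p t * Nnorm q c t := fun _ => rfl
  have hSsucc : ∀ m, m ≤ d + 1 → S m = p m * Nnorm q c m + S (m + 1) := by
    intro m hm
    rw [hS]
    exact Finset.sum_eq_sum_Ico_succ_bot (by omega) _
  have hS0 : S 0 = 0 := by
    rw [hSdef 0, ← Finset.range_eq_Ico]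
    exact hroot
  have hN1 : Nnorm q c 1 = c := by
    rw [Nnorm_succ, Nnorm_zero, one_mul, pow_zero, pow_one]
  -- coefficient identities
  have hcoeff : ∀ m, m ≤ d + 1 →
      (if m = 0 then 0 else Q (m - 1)) - (if m = d + 1 then 0 else Q m * c ^ q ^ m) = p m := by
    intro m hm
    rcases Nat.eq_zero_or_pos m with hm0 | hm0
    · subst hm0
      rw [if_pos rfl, if_neg (by omega)]
      have h1 : Q 0 * c = S 1 := by
        rw [hQS, hN1, div_mul_cancel₀ _ hc]
      have h2 : S 0 = p 0 + S 1 := by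
        have := hSsucc 0 (by omega)
        rwa [Nnorm_zero, mul_one] at this
      rw [pow_zero, pow_one, zero_sub, h1]
      rw [hS0] at h2
      linear_combination -h1 + h2 + h1
    rcases Nat.lt_or_ge m (d + 1) with hmd | hmd
    · -- middle case
      rw [if_neg (by omega), if_neg (by omega)]
      obtain ⟨m', rfl⟩ : ∃ m', m = m' + 1 := ⟨m - 1, by omega⟩
      simp only [Nat.add_sub_cancel]
      have hNm : Nnorm q c (m' + 1) ≠ 0 := Nnorm_ne_zero hc _
      have hNm2 : Nnorm q c (m' + 2) = Nnorm q c (m' + 1) * c ^ q ^ (m' + 1) :=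
        Nnorm_succ c (m' + 1)
      have hcq : (c : F) ^ q ^ (m' + 1) ≠ 0 := pow_ne_zero _ hc
      have hSm : S (m' + 1) = p (m' + 1) * Nnorm q c (m' + 1) + S (m' + 2) :=
        hSsucc _ (by omega)
      rw [hQS, hQS, hSm, hNm2]
      field_simp
      ring
    · -- top case
      have hmeq : m = d + 1 := by omega
      subst hmeq
      rw [if_neg (by omega), if_pos rfl, sub_zero]
      obtain ⟨m', rfl⟩ : ∃ m', d = m' := ⟨d, rfl⟩
      have : Q d = p (d + 1) := Qcoeff_top hc
      simpa [Nat.add_sub_cancel] using this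
  -- now the sums
  have hterm : ∀ m, Q m * ((x ^ q * a - c * x) ^ q ^ m * Nnorm q a m)
      = Q m * (x ^ q ^ (m + 1) * Nnorm q a (m + 1))
        - (Q m * c ^ q ^ m) * (x ^ q ^ m * Nnorm q a m) := by
    intro m
    have h1 : (x ^ q * a - c * x) ^ q ^ m
        = x ^ q ^ (m + 1) * a ^ q ^ m - c ^ q ^ m * x ^ q ^ m := by
      rw [frob_sub hq, mul_pow, mul_pow, ← pow_mul, ← pow_succ']
    rw [h1, Nnorm_succ]
    ring
  rw [Lfun]
  conv_rhs => rw [Lfun]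
  rw [Finset.sum_congr rfl (fun m _ => hterm m), Finset.sum_sub_distrib]
  have hfirst : ∑ m ∈ Finset.range (d + 1), Q m * (x ^ q ^ (m + 1) * Nnorm q a (m + 1))
      = ∑ m ∈ Finset.range (d + 2),
          (if m = 0 then 0 else Q (m - 1)) * (x ^ q ^ m * Nnorm q a m) := by
    rw [Finset.sum_range_succ' (fun m => (if m = 0 then 0 else Q (m - 1)) * (x ^ q ^ m * Nnorm q a m)) (d + 1)]
    simp
  have hsecond : ∑ m ∈ Finset.range (d + 2),
          (if m = d + 1 then 0 else Q m * c ^ q ^ m) * (x ^ q ^ m * Nnorm q a m)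
      = ∑ m ∈ Finset.range (d + 1), (Q m * c ^ q ^ m) * (x ^ q ^ m * Nnorm q a m) := by
    rw [Finset.sum_range_succ, if_pos rfl, zero_mul, add_zero]
    apply Finset.sum_congr rfl
    intro m hm
    rw [Finset.mem_range] at hm
    rw [if_neg (by omega)]
  rw [hfirst, ← hsecond, ← Finset.sum_sub_distrib]
  apply Finset.sum_congr rfl
  intro m hm
  rw [Finset.mem_range] at hm
  rw [← sub_mul, hcoeff m (by omega)]

lemma key (hq : Fintype.card Fq = q) {g : ℕ} (a : Fin g → F)
    (ha0 : ∀ j, a j ≠ 0)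
    (hnc : ∀ j j' : Fin g, j ≠ j' → ∀ x y : F, x ≠ 0 → y ≠ 0 →
      a j * x ^ (q - 1) ≠ a j' * y ^ (q - 1)) :
    ∀ d (p : ℕ → F), p d ≠ 0 →
      ∑ j, finrank Fq (ker (Lmap hq p d (a j))) ≤ d := by
  have hq1 : 1 < q := by rw [← hq]; exact Fintype.one_lt_card
  intro d
  induction d with
  | zero =>
    intro p hp
    have hker : ∀ j : Fin g, ker (Lmap hq p 0 (a j)) = ⊥ := by
      intro j
      rw [eq_bot_iff]
      intro x hx
      have : Lfun q p 0 (a j) x = 0 := hx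
      rw [Lfun, show (0 : ℕ) + 1 = 1 from rfl, Finset.range_one,
        Finset.sum_singleton] at this
      simp only [pow_zero, pow_one, Nnorm_zero, mul_one] at this
      rcases mul_eq_zero.1 this with h | h
      · exact absurd h hp
      · simpa using h
    calc ∑ j : Fin g, finrank Fq (ker (Lmap hq p 0 (a j)))
        = ∑ j : Fin g, 0 :=
          Finset.sum_congr rfl (fun j _ => by rw [hker j, finrank_bot])
      _ = 0 := Finset.sum_const_zero
      _ ≤ 0 := le_refl 0
  | succ d IH =>
    intro p hp
    by_cases hall : ∀ (j : Fin g) (x : F), Lfun q p (d + 1) (a j) x = 0 → x = 0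
    · have hker : ∀ j : Fin g, ker (Lmap hq p (d + 1) (a j)) = ⊥ := by
        intro j
        rw [eq_bot_iff]
        intro x hx
        simpa using hall j x hx
      calc ∑ j : Fin g, finrank Fq (ker (Lmap hq p (d + 1) (a j)))
          = ∑ j : Fin g, 0 :=
            Finset.sum_congr rfl (fun j _ => by rw [hker j, finrank_bot])
        _ = 0 := Finset.sum_const_zero
        _ ≤ d + 1 := by omega
    · push_neg at hall
      obtain ⟨j0, x0, hx0L, hx0⟩ := hall
      set c := a j0 * x0 ^ (q - 1) with hcdef
      have hc : c ≠ 0 := mul_ne_zero (ha0 j0) (pow_ne_zero _ hx0)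
      have hroot : ∑ t ∈ Finset.range (d + 2), p t * Nnorm q c t = 0 := by
        have h1 : (∑ t ∈ Finset.range (d + 2), p t * Nnorm q c t) * x0
            = Lfun q p (d + 1) (a j0) x0 := by
          rw [Finset.sum_mul, Lfun]
          apply Finset.sum_congr rfl
          intro t _
          rw [mul_assoc, hcdef, Nnorm_conj hq x0 (a j0) t]
          ring
        rw [hx0L] at h1
        exact (mul_eq_zero.1 h1).resolve_right hx0
      set Q := Qcoeff q p d c with hQdef
      have hfac : ∀ j : Fin g,
          Lmap hq p (d + 1) (a j) = (Lmap hq Q d (a j)) ∘ₗ (Dmap hq (a j) c) := by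
        intro j
        ext x
        have : Dmap hq (a j) c x = x ^ q * a j - c * x := rfl
        rw [LinearMap.comp_apply, Lmap_apply, Lmap_apply, this]
        exact factor_step hq d p hc hroot (a j) x
      have hQtop : Q d ≠ 0 := by
        rw [hQdef, Qcoeff_top hc]
        exact hp
      have hDsum : ∑ j : Fin g, finrank Fq (ker (Dmap hq (a j) c)) ≤ 1 := by
        have hDzero : ∀ j : Fin g, j ≠ j0 → finrank Fq (ker (Dmap hq (a j) c)) = 0 := by
          intro j hj
          have : ker (Dmap hq (a j) c) = ⊥ := by
            rw [eq_bot_iff]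
            intro x hx
            have hxx : x ^ q * a j - c * x = 0 := hx
            by_contra hx0'
            have hxne : x ≠ 0 := by simpa using hx0'
            have hxq : x ^ q = x ^ (q - 1) * x := by
              rw [← pow_succ]
              congr 1
              omega
            have : a j * x ^ (q - 1) = c := by
              have h2 : (a j * x ^ (q - 1)) * x = c * x := by
                calc (a j * x ^ (q - 1)) * x = x ^ q * a j := by rw [hxq]; ring
                  _ = c * x := by linear_combination hxx
              exact mul_right_cancel₀ hxne h2
            exact hnc j j0 hj x x0 hxne hx0 (this.trans hcdef)
          rw [this, finrank_bot]
        calc ∑ j : Fin g, finrank Fq (ker (Dmap hq (a j) c))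
            = finrank Fq (ker (Dmap hq (a j0) c)) :=
              Finset.sum_eq_single j0 (fun j _ hj => hDzero j hj) (by simp)
          _ ≤ 1 := finrank_ker_Dmap_le_one hq (ha0 j0) c
      calc ∑ j : Fin g, finrank Fq (ker (Lmap hq p (d + 1) (a j)))
          ≤ ∑ j : Fin g, (finrank Fq (ker (Lmap hq Q d (a j)))
              + finrank Fq (ker (Dmap hq (a j) c))) := by
            apply Finset.sum_le_sum
            intro j _
            rw [hfac j]
            exact finrank_ker_comp _ _
        _ = (∑ j : Fin g, finrank Fq (ker (Lmap hq Q d (a j))))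
              + ∑ j : Fin g, finrank Fq (ker (Dmap hq (a j) c)) :=
            Finset.sum_add_distrib
        _ ≤ d + 1 := by
            have := IH Q hQtop
            omega

lemma geom_nat (q r : ℕ) (hq : 1 ≤ q) :
    (q - 1) * (∑ i ∈ Finset.range r, q ^ i) = q ^ r - 1 := by
  induction r with
  | zero => simp
  | succ r IH =>
    rw [Finset.sum_range_succ, Nat.mul_add, IH, Nat.sub_mul, one_mul]
    have h1 : q ^ r ≤ q ^ (r + 1) := Nat.pow_le_pow_right (by omega) (by omega)
    have h2 : 1 ≤ q ^ r := Nat.one_le_pow _ _ (by omega)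
    have h3 : q ^ (r + 1) = q * q ^ r := by ring
    omega

lemma gamma_ne_zero {γ : F} (hγ : ∀ x : F, x ≠ 0 → ∃ m : ℕ, x = γ ^ m)
    (hcard : 3 ≤ Fintype.card F) : γ ≠ 0 := by
  intro h0
  have hsub : (Finset.univ : Finset F) ⊆ {0, 1} := by
    intro x _
    by_cases hx : x = 0
    · simp [hx]
    · obtain ⟨m, hm⟩ := hγ x hx
      rcases Nat.eq_zero_or_pos m with hm0 | hm0
      · simp [hm, hm0]
      · rw [h0, zero_pow (by omega)] at hm
        exact absurd hm hx
  have := Finset.card_le_card hsub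
  have h2 : ({0, 1} : Finset F).card ≤ 2 := Finset.card_insert_le _ _ |>.trans (by simp)
  rw [Finset.card_univ] at this
  omega

lemma gamma_pow_ne_zero {r g : ℕ} (hr : 1 ≤ r) (hq1 : 1 < q)
    (hF : Fintype.card F = q ^ r)
    {γ : F} (hγ : ∀ x : F, x ≠ 0 → ∃ m : ℕ, x = γ ^ m) (hgq : g < q)
    (j : Fin g) : γ ^ (j : ℕ) ≠ 0 := by
  by_cases h0 : γ = 0
  · have hj0 : (j : ℕ) = 0 := by
      by_contra hj
      have hg2 : 2 ≤ g := by have := j.2; omega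
      have hq3 : 3 ≤ q := by omega
      have : 3 ≤ Fintype.card F := by
        rw [hF]
        calc 3 ≤ q := hq3
          _ = q ^ 1 := (pow_one q).symm
          _ ≤ q ^ r := Nat.pow_le_pow_right (by omega) hr
      exact gamma_ne_zero hγ this h0
    rw [hj0, pow_zero]
    exact one_ne_zero
  · exact pow_ne_zero _ h0

lemma gamma_nc {r g : ℕ} (hr : 1 ≤ r) (hq1 : 1 < q)
    (hF : Fintype.card F = q ^ r)
    {γ : F} (hγ : ∀ x : F, x ≠ 0 → ∃ m : ℕ, x = γ ^ m) (hgq : g < q) :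
    ∀ j j' : Fin g, j ≠ j' → ∀ x y : F, x ≠ 0 → y ≠ 0 →
      γ ^ (j : ℕ) * x ^ (q - 1) ≠ γ ^ (j' : ℕ) * y ^ (q - 1) := by
  have main : ∀ j j' : Fin g, (j' : ℕ) < (j : ℕ) → ∀ x y : F, x ≠ 0 → y ≠ 0 →
      γ ^ (j : ℕ) * x ^ (q - 1) ≠ γ ^ (j' : ℕ) * y ^ (q - 1) := by
    intro j j' hlt x y hx hy heq
    have hg2 : 2 ≤ g := by have := j.2; omega
    have hq3 : 3 ≤ q := by omega
    have hcard3 : 3 ≤ Fintype.card F := by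
      rw [hF]
      calc 3 ≤ q := hq3
        _ = q ^ 1 := (pow_one q).symm
        _ ≤ q ^ r := Nat.pow_le_pow_right (by omega) hr
    have hγ0 : γ ≠ 0 := gamma_ne_zero hγ hcard3
    set e := (j : ℕ) - (j' : ℕ) with he
    have he1 : 1 ≤ e := by omega
    have hj : (j : ℕ) = e + (j' : ℕ) := by omega
    have heq' : γ ^ e * x ^ (q - 1) = y ^ (q - 1) := by
      have h1 : γ ^ (j' : ℕ) * (γ ^ e * x ^ (q - 1))
          = γ ^ (j' : ℕ) * y ^ (q - 1) := by
        rw [← heq, hj, pow_add]; ring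
      exact mul_left_cancel₀ (pow_ne_zero _ hγ0) h1
    set s := ∑ i ∈ Finset.range r, q ^ i with hs
    have hs1 : 1 ≤ s := by
      rw [hs]
      calc 1 = ∑ i ∈ Finset.range 1, q ^ i := by simp
        _ ≤ s := Finset.sum_le_sum_of_subset (by
            intro t ht
            rw [Finset.mem_range] at ht ⊢
            omega)
    have hgeom : (q - 1) * s = q ^ r - 1 := geom_nat q r (by omega)
    have hpow1 : ∀ z : F, z ≠ 0 → z ^ ((q - 1) * s) = 1 := by
      intro z hz
      rw [hgeom, ← hF]
      exact FiniteField.pow_card_sub_one_eq_one z hz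
    have h3 : γ ^ (e * s) * x ^ ((q - 1) * s) = y ^ ((q - 1) * s) := by
      rw [pow_mul γ, pow_mul x, pow_mul y, ← mul_pow, heq']
    rw [hpow1 x hx, hpow1 y hy, mul_one] at h3
    -- order of γ is q^r - 1
    set u : Fˣ := Units.mk0 γ hγ0 with hu
    have hall : ∀ v : Fˣ, v ∈ Subgroup.zpowers u := by
      intro v
      obtain ⟨m, hm⟩ := hγ (v : F) v.ne_zero
      refine ⟨(m : ℤ), ?_⟩
      show u ^ (m : ℤ) = v
      ext
      rw [zpow_natCast, Units.val_pow_eq_pow_val, hu, Units.val_mk0, hm]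
    have hord : orderOf u = q ^ r - 1 := by
      rw [orderOf_eq_card_of_forall_mem_zpowers hall, Nat.card_eq_fintype_card,
        Fintype.card_units, hF]
    have hdvd : orderOf u ∣ e * s := by
      apply orderOf_dvd_of_pow_eq_one
      ext
      rw [Units.val_pow_eq_pow_val, hu, Units.val_mk0, Units.val_one]
      exact h3
    rw [hord, ← hgeom] at hdvd
    have hdvd2 : (q - 1) ∣ e := by
      have := (Nat.mul_dvd_mul_iff_right (by omega : 0 < s)).1 hdvd
      exact this
    have : q - 1 ≤ e := Nat.le_of_dvd (by omega) hdvd2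
    have hjlt : (j : ℕ) < g := j.2
    omega
  intro j j' hne x y hx hy
  rcases lt_trichotomy (j' : ℕ) (j : ℕ) with h | h | h
  · exact main j j' h x y hx hy
  · exact absurd (Fin.ext h.symm) hne
  · exact (main j' j h y x hy hx).symm

lemma Nnorm_frob (hq : Fintype.card Fq = q) (a : F) (m : ℕ) :
    Nnorm q a (m + 1) = Nnorm q a m ^ q * a := by
  rw [Nnorm, Finset.prod_range_succ']
  have h1 : ∀ i, a ^ q ^ (i + 1) = (a ^ q ^ i) ^ q := by
    intro i
    rw [← pow_mul, ← pow_succ]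
  rw [Finset.prod_congr rfl (fun i _ => h1 i), Finset.prod_pow]
  rw [pow_zero, pow_one, Nnorm]

lemma wtv_eq_card {ι : Type*} [Fintype ι] (w : ι → F) :
    wtv w = (Finset.univ.filter (fun i => w i ≠ 0)).card := by
  rw [wtv, Set.ncard_eq_toFinset_card']
  congr 1
  ext i
  simp

lemma card_index_lt {g r : ℕ} (hr : 1 ≤ r) (t : ℕ) (ht : t ≤ g * r) :
    (Finset.univ.filter
      (fun pr : Fin g × Fin r => (pr.1 : ℕ) * r + (pr.2 : ℕ) < t)).card = t := by
  classical
  have hbij : (Finset.univ.filter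
      (fun pr : Fin g × Fin r => (pr.1 : ℕ) * r + (pr.2 : ℕ) < t)).card
      = (Finset.range t).card := by
    apply Finset.card_bij (fun (pr : Fin g × Fin r) _ => (pr.1 : ℕ) * r + (pr.2 : ℕ))
    · intro pr hpr
      rw [Finset.mem_filter] at hpr
      rw [Finset.mem_range]
      exact hpr.2
    · intro pr hpr pr' hpr' hee
      have h2 := pr.2.2
      have h2' := pr'.2.2
      have hfst : (pr.1 : ℕ) = (pr'.1 : ℕ) := by
        have e1 : ((pr.1 : ℕ) * r + (pr.2 : ℕ)) / r = (pr.1 : ℕ) := by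
          rw [add_comm, Nat.add_mul_div_right _ _ (by omega : 0 < r),
            Nat.div_eq_of_lt h2, zero_add]
        have e2 : ((pr'.1 : ℕ) * r + (pr'.2 : ℕ)) / r = (pr'.1 : ℕ) := by
          rw [add_comm, Nat.add_mul_div_right _ _ (by omega : 0 < r),
            Nat.div_eq_of_lt h2', zero_add]
        rw [← e1, ← e2, hee]
      have hsnd : (pr.2 : ℕ) = (pr'.2 : ℕ) := by
        have hmul : (pr.1 : ℕ) * r = (pr'.1 : ℕ) * r := by rw [hfst]
        omega
      exact Prod.ext (Fin.ext hfst) (Fin.ext hsnd)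
    · intro n hn
      rw [Finset.mem_range] at hn
      have hnlt : n < g * r := lt_of_lt_of_le hn ht
      have hdiv : n / r < g := by
        rw [Nat.div_lt_iff_lt_mul (by omega : 0 < r)]
        exact hnlt
      refine ⟨(⟨n / r, hdiv⟩, ⟨n % r, Nat.mod_lt _ (by omega)⟩), ?_, ?_⟩
      · rw [Finset.mem_filter]
        refine ⟨Finset.mem_univ _, ?_⟩
        have : n / r * r + n % r = n := by
          rw [mul_comm]
          exact Nat.div_add_mod n r
        simpa [this] using hn
      · show n / r * r + n % r = n
        rw [mul_comm]
        exact Nat.div_add_mod n r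
  rw [hbij, Finset.card_range]

lemma evalD_eq_sum_range (a : F) (P : Polynomial F) {n : ℕ}
    (hP : P ∈ Polynomial.degreeLT F n) (x : F) :
    evalD q a P x = ∑ i ∈ Finset.range n, P.coeff i * (x ^ q ^ i * Nnorm q a i) := by
  rw [evalD]
  apply Finset.sum_subset
  · intro i hi
    rw [Polynomial.mem_support_iff] at hi
    rw [Finset.mem_range]
    have h1 := Polynomial.le_degree_of_ne_zero hi
    rw [Polynomial.mem_degreeLT] at hP
    exact_mod_cast lt_of_le_of_lt h1 hP
  · intro i _ hi
    rw [Polynomial.notMem_support_iff] at hi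
    rw [hi, zero_mul]

lemma evalD_eq_Lfun (a : F) (P : Polynomial F) {d : ℕ}
    (hP : P ∈ Polynomial.degreeLT F (d + 1)) (x : F) :
    evalD q a P x = Lfun q P.coeff d a x :=
  evalD_eq_sum_range a P hP x

/-- The total-evaluation linear map on polynomials truncated to degree < k. -/
noncomputable def Tmap (q k : ℕ) {Fq F : Type*} [Field Fq] [Field F] [Algebra Fq F]
    {r g : ℕ} (b : Basis (Fin r) Fq F) (a : Fin g → F) :
    Polynomial F →ₗ[F] (Fin g × Fin r → F) where
  toFun P := fun pr => ∑ i ∈ Finset.range k, P.coeff i * (b pr.2 ^ q ^ i * Nnorm q (a pr.1) i)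
  map_add' P1 P2 := by
    funext pr
    simp only [Polynomial.coeff_add, add_mul, Finset.sum_add_distrib, Pi.add_apply]
  map_smul' c P := by
    funext pr
    simp only [Polynomial.coeff_smul, smul_eq_mul, RingHom.id_apply, Pi.smul_apply,
      Finset.mul_sum, mul_assoc]

lemma totalEval_eq_Tmap {r g : ℕ} (k : ℕ) (b : Basis (Fin r) Fq F) (a : Fin g → F)
    {P : Polynomial F} (hP : P ∈ Polynomial.degreeLT F k) :
    totalEval q b a P = Tmap q k b a P := by
  funext pr
  exact evalD_eq_sum_range (a pr.1) P hP (b pr.2)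

lemma code_eq_map {r g : ℕ} (k : ℕ) (b : Basis (Fin r) Fq F) (a : Fin g → F) :
    (Submodule.map (Tmap q k b a) (Polynomial.degreeLT F k) :
      Set (Fin g × Fin r → F)) = CodeLRS q b a k := by
  ext w
  constructor
  · rintro ⟨P, hP, rfl⟩
    exact ⟨P, hP, (totalEval_eq_Tmap k b a hP).symm⟩
  · rintro ⟨P, hP, rfl⟩
    exact ⟨P, hP, (totalEval_eq_Tmap k b a hP).symm⟩

lemma lift_step (hq : Fintype.card Fq = q) (t : ℕ) (p : ℕ → F)
    (hptop : ∀ i, t < i → p i = 0) (c a x : F) :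
    Lfun q (fun m => (if m = 0 then (0 : F) else p (m - 1) ^ q) - c * p m) (t + 1) a x
      = (Lfun q p t a x) ^ q * a - c * Lfun q p t a x := by
  rw [Lfun]
  simp only [sub_mul]
  rw [Finset.sum_sub_distrib]
  have hsecond : ∑ m ∈ Finset.range (t + 2), c * p m * (x ^ q ^ m * Nnorm q a m)
      = c * Lfun q p t a x := by
    rw [Finset.sum_range_succ, hptop (t + 1) (by omega)]
    rw [Lfun, Finset.mul_sum]
    simp only [mul_zero, zero_mul, add_zero]
    exact Finset.sum_congr rfl fun m _ => by ring
  have hfirst : ∑ m ∈ Finset.range (t + 2),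
        (if m = 0 then (0 : F) else p (m - 1) ^ q) * (x ^ q ^ m * Nnorm q a m)
      = (Lfun q p t a x) ^ q * a := by
    rw [Finset.sum_range_succ'
      (fun m => (if m = 0 then (0 : F) else p (m - 1) ^ q) * (x ^ q ^ m * Nnorm q a m)) (t + 1)]
    simp only [Nat.succ_ne_zero, if_false, eq_self_iff_true, if_true, zero_mul, add_zero,
      Nat.add_sub_cancel]
    have hpow : (Lfun q p t a x) ^ q = ∑ m ∈ Finset.range (t + 1),
        (p m * (x ^ q ^ m * Nnorm q a m)) ^ q := by
      have := frob_sum hq 1 (Finset.range (t + 1))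
        (fun m => p m * (x ^ q ^ m * Nnorm q a m))
      rw [pow_one] at this
      rw [Lfun, this]
    rw [hpow, Finset.sum_mul]
    apply Finset.sum_congr rfl
    intro m _
    have h1 : (x ^ q ^ m) ^ q = x ^ q ^ (m + 1) := by
      rw [← pow_mul, ← pow_succ]
    have h2 : Nnorm q a (m + 1) = Nnorm q a m ^ q * a := Nnorm_frob hq a m
    rw [mul_pow, mul_pow, h1, h2]
    ring
  rw [hfirst, hsecond]

lemma exists_vanishing (hq : Fintype.card Fq = q) {g r : ℕ} (hr : 1 ≤ r)
    (b : Basis (Fin r) Fq F) (a : Fin g → F)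
    (ha0 : ∀ j, a j ≠ 0)
    (hnc : ∀ j j' : Fin g, j ≠ j' → ∀ x y : F, x ≠ 0 → y ≠ 0 →
      a j * x ^ (q - 1) ≠ a j' * y ^ (q - 1)) :
    ∀ t, t ≤ g * r → ∃ p : ℕ → F, p t = 1 ∧ (∀ i, t < i → p i = 0) ∧
      ∀ (j : Fin g) (i : Fin r), (j : ℕ) * r + (i : ℕ) < t → Lfun q p t (a j) (b i) = 0 := by
  intro t
  induction t with
  | zero =>
    intro _
    refine ⟨fun i => if i = 0 then 1 else 0, by simp, fun i hi => ?_,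
      fun j i hi => absurd hi (by omega)⟩
    show (if i = 0 then (1 : F) else 0) = 0
    rw [if_neg (by omega)]
  | succ t IH =>
    intro ht
    obtain ⟨p, hp1, hp0, hpvan⟩ := IH (by omega)
    set jt : Fin g := ⟨t / r, by rw [Nat.div_lt_iff_lt_mul (by omega : 0 < r)]; omega⟩ with hjt
    set it : Fin r := ⟨t % r, Nat.mod_lt _ (by omega : 0 < r)⟩ with hit
    have hidx : (jt : ℕ) * r + (it : ℕ) = t := by
      show t / r * r + t % r = t
      rw [mul_comm]
      exact Nat.div_add_mod t r
    set y := Lfun q p t (a jt) (b it) with hy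
    have hyne : y ≠ 0 := by
      intro hy0
      have hzeros : (Finset.univ.filter
          (fun pr : Fin g × Fin r => (pr.1 : ℕ) * r + (pr.2 : ℕ) < t + 1))
          ⊆ (Finset.univ.filter
          (fun pr : Fin g × Fin r => Lfun q p t (a pr.1) (b pr.2) = 0)) := by
        intro pr hpr
        rw [Finset.mem_filter] at hpr ⊢
        refine ⟨Finset.mem_univ _, ?_⟩
        rcases Nat.lt_or_ge ((pr.1 : ℕ) * r + (pr.2 : ℕ)) t with h | h
        · exact hpvan pr.1 pr.2 h
        · have heq : (pr.1 : ℕ) * r + (pr.2 : ℕ) = t := by omega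
          have hj : pr.1 = jt := by
            apply Fin.ext
            show (pr.1 : ℕ) = t / r
            have h2 := pr.2.2
            rw [← heq, add_comm, Nat.add_mul_div_right _ _ (by omega : 0 < r),
              Nat.div_eq_of_lt h2, zero_add]
          have hi : pr.2 = it := by
            apply Fin.ext
            show (pr.2 : ℕ) = t % r
            have h2 := pr.2.2
            rw [← heq, add_comm, Nat.add_mul_mod_self_right, Nat.mod_eq_of_lt h2]
          rw [hj, hi]
          exact hy0
      have hcard1 := card_index_lt (g := g) hr (t + 1) ht
      have hcard2 : (Finset.univ.filter
          (fun pr : Fin g × Fin r => Lfun q p t (a pr.1) (b pr.2) = 0)).card ≤ t :=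
        card_zeros_le hq b a p t (key hq a ha0 hnc t p (by rw [hp1]; exact one_ne_zero))
      have := Finset.card_le_card hzeros
      omega
    set c := a jt * y ^ (q - 1) with hc
    refine ⟨fun m => (if m = 0 then (0 : F) else p (m - 1) ^ q) - c * p m, ?_, ?_, ?_⟩
    · simp only [if_neg (Nat.succ_ne_zero t), Nat.add_sub_cancel, hp1, one_pow,
        hp0 (t + 1) (by omega), mul_zero, sub_zero]
    · intro i hi
      show (if i = 0 then (0 : F) else p (i - 1) ^ q) - c * p i = 0
      have hq1 : 1 < q := by rw [← hq]; exact Fintype.one_lt_card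
      rw [if_neg (by omega : ¬ i = 0), hp0 (i - 1) (by omega), hp0 i (by omega),
        zero_pow (by omega : q ≠ 0)]
      simp
    · intro j i hij
      rw [lift_step hq t p hp0 c (a j) (b i)]
      rcases Nat.lt_or_ge ((j : ℕ) * r + (i : ℕ)) t with h | h
      · rw [hpvan j i h]
        have hq1 : 1 < q := by rw [← hq]; exact Fintype.one_lt_card
        rw [zero_pow (by omega), zero_mul, mul_zero, sub_zero]
      · have heq : (j : ℕ) * r + (i : ℕ) = t := by omega
        have hjj : j = jt := by
          apply Fin.ext
          show (j : ℕ) = t / r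
          have h2 := i.2
          rw [← heq, add_comm, Nat.add_mul_div_right _ _ (by omega : 0 < r),
            Nat.div_eq_of_lt h2, zero_add]
        have hii : i = it := by
          apply Fin.ext
          show (i : ℕ) = t % r
          have h2 := i.2
          rw [← heq, add_comm, Nat.add_mul_mod_self_right, Nat.mod_eq_of_lt h2]
        have hq1 : 1 < q := by rw [← hq]; exact Fintype.one_lt_card
        rw [hjj, hii, ← hy, hc]
        have : a jt * y ^ (q - 1) * y = a jt * y ^ q := by
          rw [mul_assoc, ← pow_succ]
          congr 2
          omega
        rw [this]
        ring

end LRS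


/-- the linearized Reed-Solomon code C_{N,k}(a,β), with
a = (γ^0,…,γ^{g-1}), γ primitive and q > g, is an F_{q^r}-linear MDS code of
dimension k and minimum Hamming distance N - k + 1, where N = gr. -/
theorem stmt15 (q r g k : ℕ) (hr : 1 ≤ r) (hg : 1 ≤ g) (hgq : g < q)
    (hk : 1 ≤ k) (hkN : k ≤ g * r)
    (Fq F : Type*) [Field Fq] [Fintype Fq] [Field F] [Fintype F] [Algebra Fq F]
    (hq : Fintype.card Fq = q) (hF : Fintype.card F = q ^ r)
    (b : Module.Basis (Fin r) Fq F)
    (γ : F) (hγ : ∀ x : F, x ≠ 0 → ∃ m : ℕ, x = γ ^ m)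
    (a : Fin g → F) (ha : ∀ j : Fin g, a j = γ ^ (j : ℕ)) :
    (∃ S : Submodule F (Fin g × Fin r → F),
        (S : Set (Fin g × Fin r → F)) = CodeLRS q b a k ∧
        Module.finrank F S = k) ∧
    (∀ w ∈ CodeLRS q b a k, w ≠ 0 → g * r - k + 1 ≤ wtv w) ∧
    (∃ w ∈ CodeLRS q b a k, w ≠ 0 ∧ wtv w = g * r - k + 1) := by
  classical
  have hq1 : 1 < q := by omega
  have ha0 : ∀ j : Fin g, a j ≠ 0 := fun j => by
    rw [ha j]; exact LRS.gamma_pow_ne_zero hr hq1 hF hγ hgq j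
  have hnc : ∀ j j' : Fin g, j ≠ j' → ∀ x y : F, x ≠ 0 → y ≠ 0 →
      a j * x ^ (q - 1) ≠ a j' * y ^ (q - 1) := by
    intro j j' hne x y hx hy
    rw [ha j, ha j']
    exact LRS.gamma_nc hr hq1 hF hγ hgq j j' hne x y hx hy
  have huniv : (Finset.univ : Finset (Fin g × Fin r)).card = g * r := by
    rw [Finset.card_univ, Fintype.card_prod, Fintype.card_fin, Fintype.card_fin]
  -- zero bound for nonzero polys
  have hzeros : ∀ P : Polynomial F, P ∈ Polynomial.degreeLT F k → P ≠ 0 →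
      (Finset.univ.filter (fun pr : Fin g × Fin r => totalEval q b a P pr = 0)).card
        ≤ k - 1 := by
    intro P hP hP0
    set d := P.natDegree with hd
    have hdk : d < k := by
      rw [hd, Polynomial.natDegree_lt_iff_degree_lt hP0]
      exact Polynomial.mem_degreeLT.1 hP
    have hPd : P ∈ Polynomial.degreeLT F (d + 1) := by
      rw [Polynomial.mem_degreeLT]
      calc P.degree ≤ (d : WithBot ℕ) := Polynomial.degree_le_natDegree
        _ < ((d + 1 : ℕ) : WithBot ℕ) := by exact_mod_cast lt_add_one d
    have heq : ∀ pr : Fin g × Fin r,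
        totalEval q b a P pr = LRS.Lfun q P.coeff d (a pr.1) (b pr.2) := by
      intro pr
      exact LRS.evalD_eq_Lfun (a pr.1) P hPd (b pr.2)
    have hfe : Finset.univ.filter (fun pr : Fin g × Fin r => totalEval q b a P pr = 0)
        = Finset.univ.filter
          (fun pr : Fin g × Fin r => LRS.Lfun q P.coeff d (a pr.1) (b pr.2) = 0) :=
      Finset.filter_congr (fun pr _ => by rw [heq pr])
    have hlead : P.coeff d ≠ 0 := by
      rw [hd]
      exact Polynomial.leadingCoeff_ne_zero.2 hP0
    have := LRS.card_zeros_le hq b a P.coeff d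
      (LRS.key hq a ha0 hnc d P.coeff hlead)
    rw [hfe]
    omega
  -- part 2
  have part2 : ∀ w ∈ CodeLRS q b a k, w ≠ 0 → g * r - k + 1 ≤ wtv w := by
    rintro w ⟨P, hP, rfl⟩ hw0
    have hP0 : P ≠ 0 := by
      rintro rfl
      apply hw0
      funext pr
      simp [totalEval, evalD]
    have hz := hzeros P hP hP0
    have hwt : wtv (totalEval q b a P) = (Finset.univ.filter
        (fun pr : Fin g × Fin r => totalEval q b a P pr ≠ 0)).card :=
      LRS.wtv_eq_card _
    have hsplit := Finset.card_filter_add_card_filter_not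
      (s := (Finset.univ : Finset (Fin g × Fin r)))
      (p := fun pr => totalEval q b a P pr = 0)
    rw [huniv] at hsplit
    have hne : (Finset.univ.filter
        (fun pr : Fin g × Fin r => totalEval q b a P pr ≠ 0)).card
        = (Finset.univ.filter
        (fun pr : Fin g × Fin r => ¬ totalEval q b a P pr = 0)).card := rfl
    omega
  refine ⟨⟨Submodule.map (LRS.Tmap q k b a) (Polynomial.degreeLT F k),
    LRS.code_eq_map k b a, ?_⟩, part2, ?_⟩
  · -- dimension
    have hinj : ∀ P ∈ Polynomial.degreeLT F k, LRS.Tmap q k b a P = 0 → P = 0 := by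
      intro P hP hT0
      by_contra hP0
      have hz := hzeros P hP hP0
      have hall : Finset.univ.filter
          (fun pr : Fin g × Fin r => totalEval q b a P pr = 0) = Finset.univ := by
        ext pr
        simp only [Finset.mem_filter, Finset.mem_univ, true_and, iff_true]
        rw [LRS.totalEval_eq_Tmap k b a hP, hT0]
        rfl
      rw [hall, huniv] at hz
      omega
    have hrange : Submodule.map (LRS.Tmap q k b a) (Polynomial.degreeLT F k)
        = LinearMap.range ((LRS.Tmap q k b a).comp
          (Polynomial.degreeLT F k).subtype) := by
      rw [LinearMap.range_comp, Submodule.range_subtype]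
    rw [hrange]
    have hker : LinearMap.ker ((LRS.Tmap q k b a).comp
        (Polynomial.degreeLT F k).subtype) = ⊥ := by
      rw [LinearMap.ker_eq_bot']
      intro P hP0
      exact Subtype.ext (hinj P.1 P.2 hP0)
    rw [LinearMap.finrank_range_of_inj (LinearMap.ker_eq_bot.1 hker)]
    rw [(Polynomial.degreeLTEquiv F k).finrank_eq]
    exact Module.finrank_fin_fun F
  · -- part 3 : a word of weight exactly g*r - k + 1
    obtain ⟨p, hp1, hp0, hpvan⟩ :=
      LRS.exists_vanishing hq hr b a ha0 hnc (k - 1) (by omega)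
    have hk1 : k - 1 + 1 = k := by omega
    set P : Polynomial F := ∑ i ∈ Finset.range k, Polynomial.C (p i) * Polynomial.X ^ i
      with hPdef
    have hcoeff : ∀ n, P.coeff n = if n ∈ Finset.range k then p n else 0 := by
      intro n
      rw [hPdef, Polynomial.finset_sum_coeff]
      rw [Finset.sum_congr rfl (fun i _ => by
        rw [Polynomial.coeff_C_mul, Polynomial.coeff_X_pow, mul_ite, mul_one, mul_zero])]
      exact Finset.sum_ite_eq _ n p
    have hPdeg : P ∈ Polynomial.degreeLT F k := by
      apply Submodule.sum_mem
      intro i hi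
      rw [Finset.mem_range] at hi
      rw [Polynomial.mem_degreeLT]
      calc (Polynomial.C (p i) * Polynomial.X ^ i).degree ≤ (i : WithBot ℕ) :=
            Polynomial.degree_C_mul_X_pow_le i (p i)
        _ < (k : WithBot ℕ) := by exact_mod_cast hi
    have hPtot : ∀ pr : Fin g × Fin r,
        totalEval q b a P pr = LRS.Lfun q p (k - 1) (a pr.1) (b pr.2) := by
      intro pr
      rw [totalEval, LRS.evalD_eq_sum_range (a pr.1) P hPdeg (b pr.2), LRS.Lfun, hk1]
      apply Finset.sum_congr rfl
      intro i hi
      rw [hcoeff i, if_pos hi]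
    set w := totalEval q b a P with hw
    have hS : Finset.univ.filter
        (fun pr : Fin g × Fin r => (pr.1 : ℕ) * r + (pr.2 : ℕ) < k - 1)
        ⊆ Finset.univ.filter (fun pr : Fin g × Fin r => w pr = 0) := by
      intro pr hpr
      rw [Finset.mem_filter] at hpr ⊢
      refine ⟨Finset.mem_univ _, ?_⟩
      rw [hPtot pr]
      exact hpvan pr.1 pr.2 hpr.2
    have hScard : (Finset.univ.filter
        (fun pr : Fin g × Fin r => (pr.1 : ℕ) * r + (pr.2 : ℕ) < k - 1)).card = k - 1 :=
      LRS.card_index_lt hr (k - 1) (by omega)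
    have hZcard : (Finset.univ.filter
        (fun pr : Fin g × Fin r => w pr = 0)).card ≤ k - 1 := by
      have hfe : Finset.univ.filter (fun pr : Fin g × Fin r => w pr = 0)
          = Finset.univ.filter
            (fun pr : Fin g × Fin r => LRS.Lfun q p (k - 1) (a pr.1) (b pr.2) = 0) :=
        Finset.filter_congr (fun pr _ => by rw [hPtot pr])
      rw [hfe]
      exact LRS.card_zeros_le hq b a p (k - 1)
        (LRS.key hq a ha0 hnc (k - 1) p (by rw [hp1]; exact one_ne_zero))
    have hZeq : (Finset.univ.filter
        (fun pr : Fin g × Fin r => w pr = 0)).card = k - 1 := by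
      have := Finset.card_le_card hS
      omega
    have hwt : wtv w = g * r - (k - 1) := by
      have hwt1 : wtv w = (Finset.univ.filter
          (fun pr : Fin g × Fin r => w pr ≠ 0)).card := LRS.wtv_eq_card _
      have hsplit := Finset.card_filter_add_card_filter_not
        (s := (Finset.univ : Finset (Fin g × Fin r)))
        (p := fun pr => w pr = 0)
      rw [huniv] at hsplit
      have hne : (Finset.univ.filter (fun pr : Fin g × Fin r => w pr ≠ 0)).card
          = (Finset.univ.filter (fun pr : Fin g × Fin r => ¬ w pr = 0)).card := rfl
      omega
    have hw0 : w ≠ 0 := by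
      intro h0
      have : wtv w = 0 := by
        rw [LRS.wtv_eq_card]
        apply Finset.card_eq_zero.2
        ext pr
        simp [h0]
      omega
    exact ⟨w, ⟨P, hPdeg, hw⟩, hw0, by omega⟩
end
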